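/- Let u, v be two vertices of a simple connected graph G of order n, and let v₁, v₂, …, v_s (1 ≤ s ≤ d(v)) be vertices in N_G(v) \ N_G(u), each different from u. Let G′ = G − vv₁ − vv₂ − ⋯ − vv_s + uv₁ + uv₂ + ⋯ + uv_s, and let f be a harmonic eigenfunction associated with ρ(𝓛(G)). If f(u) = f(v), then ρ(𝓛(G)) ≤ ρ(𝓛(G′)). -/

import Mathlib

open Matrix Finset BigOperators

namespace NLap

variable {V : Type} [Fintype V] [DecidableEq V]

/-- The normalized Laplacian matrix `𝓛(G) = D^{-1/2} (D - A) D^{-1/2}` of a simple graph. -/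
noncomputable def normLap (G : SimpleGraph V) [DecidableRel G.Adj] : Matrix V V ℝ :=
  Matrix.diagonal (fun v => (Real.sqrt (G.degree v : ℝ))⁻¹) * G.lapMatrix ℝ *
    Matrix.diagonal (fun v => (Real.sqrt (G.degree v : ℝ))⁻¹)

/-- The `k`-th smallest eigenvalue (1-indexed, counted with multiplicity) of a real matrix:
the `k`-th element of the sorted multiset of roots of its characteristic polynomial. -/
noncomputable def nthEig (M : Matrix V V ℝ) (k : ℕ) : ℝ :=
  (M.charpoly.roots.sort (· ≤ ·)).getD (k - 1) 0

/-- `λ₂(G)`, the second smallest normalized Laplacian eigenvalue. -/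
noncomputable def lambda2 (G : SimpleGraph V) [DecidableRel G.Adj] : ℝ :=
  nthEig (normLap G) 2

/-- `ρ(𝓛(G)) = λ_n(G)`, the normalized Laplacian spectral radius. -/
noncomputable def rhoL (G : SimpleGraph V) [DecidableRel G.Adj] : ℝ :=
  nthEig (normLap G) (Fintype.card V)

/-- `f` is a harmonic eigenfunction associated with the eigenvalue `lam` of `𝓛(G)`:
`f ≠ 0` and `L f = lam • D f`. -/
def IsHarmonic (G : SimpleGraph V) [DecidableRel G.Adj] (lam : ℝ) (f : V → ℝ) : Prop :=
  f ≠ 0 ∧ G.lapMatrix ℝ *ᵥ f = fun v => lam * ((G.degree v : ℝ) * f v)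

/-- `∑_{uv ∈ E(G)} (f(u) - f(v))²`. -/
noncomputable def edgeSum (G : SimpleGraph V) [DecidableRel G.Adj] (f : V → ℝ) : ℝ :=
  ∑ e ∈ G.edgeFinset, Sym2.lift ⟨fun u v => (f u - f v) ^ 2, fun u v => by ring⟩ e


/-- The graph obtained from `G` by subdividing the edge `uv`:
delete `uv`, add a new vertex `w = Sum.inr ()` and the edges `uw`, `wv`. -/
def subdivide {V : Type} (G : SimpleGraph V) (u v : V) : SimpleGraph (V ⊕ Unit) where
  Adj x y :=
    match x, y with
    | Sum.inl a, Sum.inl b => G.Adj a b ∧ ¬(a = u ∧ b = v) ∧ ¬(a = v ∧ b = u)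
    | Sum.inl a, Sum.inr _ => a = u ∨ a = v
    | Sum.inr _, Sum.inl b => b = u ∨ b = v
    | Sum.inr _, Sum.inr _ => False
  symm := by
    constructor
    rintro (a | a) (b | b) h
    · exact ⟨h.1.symm, fun hc => h.2.2 ⟨hc.2, hc.1⟩, fun hc => h.2.1 ⟨hc.2, hc.1⟩⟩
    · exact h
    · exact h
    · exact h
  loopless := by
    constructor
    rintro (a | a) h
    · exact G.loopless.irrefl a h.1
    · exact h

instance {V : Type} [DecidableEq V] (G : SimpleGraph V) [DecidableRel G.Adj] (u v : V) :
    DecidableRel (subdivide G u v).Adj := fun x y => by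
  rcases x with a | a <;> rcases y with b | b
  · exact inferInstanceAs (Decidable (G.Adj a b ∧ ¬(a = u ∧ b = v) ∧ ¬(a = v ∧ b = u)))
  · exact inferInstanceAs (Decidable (a = u ∨ a = v))
  · exact inferInstanceAs (Decidable (b = u ∨ b = v))
  · exact inferInstanceAs (Decidable False)

/-- `IsSubdivisionOf H G` : `H` is obtained from `G` (up to isomorphism) by repeatedly
subdividing edges. -/
inductive IsSubdivisionOf : {V W : Type} → SimpleGraph W → SimpleGraph V → Prop
  | iso {V W : Type} {G : SimpleGraph V} {H : SimpleGraph W} :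
      Nonempty (G ≃g H) → IsSubdivisionOf H G
  | step {V W : Type} {G : SimpleGraph V} {H : SimpleGraph W} (u v : V) :
      G.Adj u v → IsSubdivisionOf H (subdivide G u v) → IsSubdivisionOf H G

/-- The graph obtained from `G₁` and `G₂` by identifying `u ∈ V(G₁)` with `v ∈ V(G₂)`;
the merged vertex is `Sum.inl u`. -/
def glue {V₁ V₂ : Type} (G₁ : SimpleGraph V₁) (G₂ : SimpleGraph V₂) (u : V₁) (v : V₂) :
    SimpleGraph (V₁ ⊕ {y : V₂ // y ≠ v}) where
  Adj x y :=
    match x, y with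
    | Sum.inl a, Sum.inl b => G₁.Adj a b
    | Sum.inl a, Sum.inr b => a = u ∧ G₂.Adj v b.1
    | Sum.inr a, Sum.inl b => b = u ∧ G₂.Adj v a.1
    | Sum.inr a, Sum.inr b => G₂.Adj a.1 b.1
  symm := by
    constructor
    rintro (a | a) (b | b) h
    · exact h.symm
    · exact h
    · exact h
    · exact h.symm
  loopless := by
    constructor
    rintro (a | a) h
    · exact G₁.loopless.irrefl a h
    · exact G₂.loopless.irrefl a.1 h

instance {V₁ V₂ : Type} [DecidableEq V₁] (G₁ : SimpleGraph V₁) (G₂ : SimpleGraph V₂)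
    [DecidableRel G₁.Adj] [DecidableRel G₂.Adj] (u : V₁) (v : V₂) :
    DecidableRel (glue G₁ G₂ u v).Adj := fun x y => by
  rcases x with a | a <;> rcases y with b | b
  · exact inferInstanceAs (Decidable (G₁.Adj a b))
  · exact inferInstanceAs (Decidable (a = u ∧ G₂.Adj v b.1))
  · exact inferInstanceAs (Decidable (b = u ∧ G₂.Adj v a.1))
  · exact inferInstanceAs (Decidable (G₂.Adj a.1 b.1))

/-- The graph `G - vv₁ - ⋯ - vvₛ + uv₁ + ⋯ + uvₛ`, where `S = {v₁, …, vₛ}`. -/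
def shiftEdges {V : Type} [DecidableEq V] (G : SimpleGraph V) (u v : V) (S : Finset V) :
    SimpleGraph V where
  Adj x y := x ≠ y ∧
    ((G.Adj x y ∧ ¬(x = v ∧ y ∈ S) ∧ ¬(y = v ∧ x ∈ S)) ∨ (x = u ∧ y ∈ S) ∨ (y = u ∧ x ∈ S))
  symm := by
    constructor
    rintro x y ⟨hxy, h⟩
    refine ⟨hxy.symm, ?_⟩
    rcases h with h | h | h
    · exact Or.inl ⟨h.1.symm, h.2.2, h.2.1⟩
    · exact Or.inr (Or.inr h)
    · exact Or.inr (Or.inl h)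
  loopless := ⟨fun x h => h.1 rfl⟩

instance {V : Type} [DecidableEq V] (G : SimpleGraph V) [DecidableRel G.Adj] (u v : V)
    (S : Finset V) : DecidableRel (shiftEdges G u v S).Adj := fun x y =>
  inferInstanceAs (Decidable (_ ∧ _))

/-- The star on `n + 1` vertices, with center `none`. -/
def starGraph (n : ℕ) : SimpleGraph (Option (Fin n)) where
  Adj i j := (i = none ∧ j ≠ none) ∨ (j = none ∧ i ≠ none)
  symm := by
    constructor
    rintro i j (h | h)
    · exact Or.inr h
    · exact Or.inl h
  loopless := by
    constructor
    rintro i (h | h) <;> exact h.2 h.1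

instance (n : ℕ) : DecidableRel (starGraph n).Adj := fun i j =>
  inferInstanceAs (Decidable (_ ∨ _))



open Polynomial in
private lemma sorted_le_getD0 {l : List ℝ} (hl : l.Pairwise (· ≤ ·)) {a : ℝ} (ha : a ∈ l) :
    a ≤ l.getD (l.length - 1) 0 := by
  obtain ⟨i, hi, rfl⟩ := List.getElem_of_mem ha
  have hlen : 0 < l.length := lt_of_le_of_lt (Nat.zero_le i) hi
  rw [List.getD_eq_getElem l 0 (by omega)]
  rcases eq_or_lt_of_le (Nat.le_sub_one_of_lt hi) with h | h
  · simp [h]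
  · have := List.Pairwise.rel_get_of_lt hl (a := ⟨i, hi⟩) (b := ⟨l.length - 1, by omega⟩)
      (by simpa using h)
    simpa [List.get_eq_getElem] using this

open Polynomial in
private lemma charpoly_unitary_conj {n : Type} [Fintype n] [DecidableEq n]
    (P : Matrix n n ℝ) (hP : P ∈ Matrix.unitaryGroup n ℝ) (M : Matrix n n ℝ) :
    (P * M * star P).charpoly = M.charpoly := by
  have hPQ : P * star P = 1 := Matrix.mem_unitaryGroup_iff.mp hP
  let F : Matrix n n ℝ →+* Matrix n n ℝ[X] := (Polynomial.C : ℝ →+* ℝ[X]).mapMatrix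
  have h1 : F P * F (star P) = 1 := by rw [← _root_.map_mul, hPQ, _root_.map_one]
  have hsc : ∀ A : Matrix n n ℝ[X], Matrix.scalar n (X : ℝ[X]) * A
      = A * Matrix.scalar n (X : ℝ[X]) :=
    fun A => Matrix.scalar_commute (X : ℝ[X]) (fun r => Commute.all X r) A
  have hcm : F P * charmatrix M * F (star P) = charmatrix (P * M * star P) := by
    rw [charmatrix, charmatrix, mul_sub, sub_mul]
    congr 1
    · calc F P * Matrix.scalar n (X : ℝ[X]) * F (star P)
          = Matrix.scalar n (X : ℝ[X]) * (F P * F (star P)) := by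
            rw [← hsc (F P), mul_assoc]
        _ = Matrix.scalar n (X : ℝ[X]) := by rw [h1, mul_one]
    · show F P * F M * F (star P) = F (P * M * star P)
      rw [← _root_.map_mul, ← _root_.map_mul]
  rw [Matrix.charpoly, Matrix.charpoly, ← hcm, Matrix.det_mul, Matrix.det_mul]
  calc (F P).det * (charmatrix M).det * (F (star P)).det
      = (charmatrix M).det * ((F P * F (star P)).det) := by rw [Matrix.det_mul]; ring
    _ = (charmatrix M).det := by rw [h1, Matrix.det_one, mul_one]

open Polynomial in
private lemma charpoly_diag {n : Type} [Fintype n] [DecidableEq n] (d : n → ℝ) :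
    (Matrix.diagonal d).charpoly = ∏ i, (X - C (d i)) := by
  unfold Matrix.charpoly Matrix.charmatrix
  rw [RingHom.mapMatrix_apply, Matrix.diagonal_map (map_zero _)]
  have h : Matrix.scalar n (X : ℝ[X]) = Matrix.diagonal (fun _ => (X : ℝ[X])) := rfl
  rw [h, Matrix.diagonal_sub, Matrix.det_diagonal]

open Polynomial in
private lemma charpoly_hermitian {V : Type} [Fintype V] [DecidableEq V] {M : Matrix V V ℝ}
    (hM : M.IsHermitian) :
    M.charpoly = ∏ i, (X - C (hM.eigenvalues i)) := by
  conv_lhs => rw [hM.spectral_theorem, Unitary.conjStarAlgAut_apply]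
  rw [charpoly_unitary_conj _ (hM.eigenvectorUnitary).prop]
  have h : Matrix.diagonal (RCLike.ofReal ∘ hM.eigenvalues) = Matrix.diagonal hM.eigenvalues := by
    congr 1
  rw [h, charpoly_diag]

private lemma rayleigh_le {V : Type} [Fintype V] [DecidableEq V] (M : Matrix V V ℝ)
    (hM : M.IsHermitian) (g : V → ℝ) :
    g ⬝ᵥ (M *ᵥ g) ≤ nthEig M (Fintype.card V) * (g ⬝ᵥ g) := by
  rcases isEmpty_or_nonempty V with hV | hV
  · simp [dotProduct]
  set e := hM.eigenvalues with he
  set lmax := nthEig M (Fintype.card V) with hlmax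
  have hroots : M.charpoly.roots = Finset.univ.val.map e := by
    rw [charpoly_hermitian hM,
      ← Polynomial.roots_multiset_prod_X_sub_C (Finset.univ.val.map e),
      Finset.prod_eq_multiset_prod, Multiset.map_map]
    rfl
  have hall : ∀ i, e i ≤ lmax := by
    intro i
    have hmem : e i ∈ M.charpoly.roots.sort (· ≤ ·) := by
      rw [Multiset.mem_sort, hroots]
      exact Multiset.mem_map_of_mem e (Finset.mem_univ_val i)
    have hlen : (M.charpoly.roots.sort (· ≤ ·)).length = Fintype.card V := by
      rw [Multiset.length_sort, hroots, Multiset.card_map]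
      rfl
    have h2 := sorted_le_getD0 (Multiset.pairwise_sort M.charpoly.roots (· ≤ ·)) hmem
    rw [hlen] at h2
    exact h2
  set U : Matrix V V ℝ := (hM.eigenvectorUnitary : Matrix V V ℝ) with hUdef
  have hUU : U * star U = 1 := Matrix.mem_unitaryGroup_iff.mp hM.eigenvectorUnitary.prop
  set h := star U *ᵥ g with hh
  have hstar : star U = Uᵀ := by
    rw [Matrix.star_eq_conjTranspose, Matrix.conjTranspose_eq_transpose_of_trivial]
  have hvm : g ᵥ* U = h := by rw [hh, hstar, Matrix.mulVec_transpose]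
  have hdiag : Matrix.diagonal (RCLike.ofReal ∘ e) = Matrix.diagonal e := by
    congr 1
  have hMg : g ⬝ᵥ (M *ᵥ g) = ∑ i, e i * h i ^ 2 := by
    conv_lhs => rw [hM.spectral_theorem, Unitary.conjStarAlgAut_apply]
    rw [hdiag]
    calc g ⬝ᵥ ((U * Matrix.diagonal e * star U) *ᵥ g)
        = (g ᵥ* U) ⬝ᵥ (Matrix.diagonal e *ᵥ (star U *ᵥ g)) := by
          rw [← Matrix.mulVec_mulVec, ← Matrix.mulVec_mulVec, Matrix.dotProduct_mulVec]
      _ = ∑ i, e i * h i ^ 2 := by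
          rw [hvm, ← hh]
          simp only [dotProduct, Matrix.mulVec_diagonal]
          exact Finset.sum_congr rfl fun i _ => by ring
  have hUh : U *ᵥ h = g := by rw [hh, Matrix.mulVec_mulVec, hUU, Matrix.one_mulVec]
  have hgg : g ⬝ᵥ g = ∑ i, h i ^ 2 := by
    calc g ⬝ᵥ g = g ⬝ᵥ (U *ᵥ h) := by rw [hUh]
      _ = (g ᵥ* U) ⬝ᵥ h := Matrix.dotProduct_mulVec _ _ _
      _ = ∑ i, h i ^ 2 := by rw [hvm]; simp [dotProduct, sq]
  rw [hMg, hgg, Finset.mul_sum]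
  exact Finset.sum_le_sum fun i _ => mul_le_mul_of_nonneg_right (hall i) (sq_nonneg _)

private lemma shiftEdges_adj {V : Type} [DecidableEq V] (G : SimpleGraph V) (u v : V)
    (S : Finset V) (x y : V) :
    (shiftEdges G u v S).Adj x y ↔ x ≠ y ∧
      ((G.Adj x y ∧ ¬(x = v ∧ y ∈ S) ∧ ¬(y = v ∧ x ∈ S)) ∨ (x = u ∧ y ∈ S) ∨
        (y = u ∧ x ∈ S)) :=
  Iff.rfl

private lemma shift_sum_indicator {V : Type} [Fintype V] [DecidableEq V] (S : Finset V) (a : V)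
    (ha : a ∉ S) (w : V → V → ℝ) :
    ∑ i : V, ∑ j : V, (if ((i = a ∧ j ∈ S) ∨ (j = a ∧ i ∈ S)) then w i j else 0)
      = ∑ x ∈ S, (w a x + w x a) := by
  have hsplit : ∀ i j : V, (if ((i = a ∧ j ∈ S) ∨ (j = a ∧ i ∈ S)) then w i j else 0)
      = (if i = a ∧ j ∈ S then w i j else 0) + (if j = a ∧ i ∈ S then w i j else 0) := by
    intro i j
    by_cases h1 : i = a ∧ j ∈ S <;> by_cases h2 : j = a ∧ i ∈ S
    · exfalso; apply ha; rw [← h1.1]; exact h2.2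
    · rw [if_pos (Or.inl h1), if_pos h1, if_neg h2, add_zero]
    · rw [if_pos (Or.inr h2), if_neg h1, if_pos h2, zero_add]
    · rw [if_neg (by tauto), if_neg h1, if_neg h2, add_zero]
  simp_rw [hsplit, Finset.sum_add_distrib]
  congr 1
  · have h1 : ∀ i : V, ∑ j : V, (if i = a ∧ j ∈ S then w i j else 0)
        = if i = a then ∑ x ∈ S, w i x else 0 := by
      intro i
      by_cases h : i = a
      · simp only [h, true_and, if_true]
        rw [Finset.sum_ite_mem, Finset.univ_inter]
      · simp [h]
    simp_rw [h1]
    rw [Finset.sum_ite_eq' Finset.univ a (fun i => ∑ x ∈ S, w i x)]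
    simp
  · have h2 : ∀ i : V, ∑ j : V, (if j = a ∧ i ∈ S then w i j else 0)
        = if i ∈ S then w i a else 0 := by
      intro i
      by_cases h : i ∈ S
      · simp only [h, and_true]
        rw [Finset.sum_ite_eq' Finset.univ a (fun j => w i j)]
        simp
      · simp [h]
    simp_rw [h2]
    rw [Finset.sum_ite_mem, Finset.univ_inter]

private lemma shift_sum_eq {V : Type} [Fintype V] [DecidableEq V] (G : SimpleGraph V)
    [DecidableRel G.Adj] (u v : V) (huv : u ≠ v) (S : Finset V)
    (hSv : ∀ x ∈ S, G.Adj v x) (hSu : ∀ x ∈ S, ¬ G.Adj u x) (hu : u ∉ S)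
    (w : V → V → ℝ) (hw : ∀ x ∈ S, w u x + w x u = w v x + w x v) :
    ∑ i : V, ∑ j : V, (if (shiftEdges G u v S).Adj i j then w i j else 0)
      = ∑ i : V, ∑ j : V, (if G.Adj i j then w i j else 0) := by
  have hv : v ∉ S := fun hvS => G.loopless.irrefl v (hSv v hvS)
  have key : ∀ i j : V, (if (shiftEdges G u v S).Adj i j then w i j else 0)
      + (if ((i = v ∧ j ∈ S) ∨ (j = v ∧ i ∈ S)) then w i j else 0)
      = (if G.Adj i j then w i j else 0)
      + (if ((i = u ∧ j ∈ S) ∨ (j = u ∧ i ∈ S)) then w i j else 0) := by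
    intro i j
    by_cases hP : (i = v ∧ j ∈ S) ∨ (j = v ∧ i ∈ S)
    · have hadj : G.Adj i j := by
        rcases hP with ⟨h1, h2⟩ | ⟨h1, h2⟩
        · rw [h1]; exact hSv j h2
        · rw [h1]; exact (hSv i h2).symm
      have hQ : ¬((i = u ∧ j ∈ S) ∨ (j = u ∧ i ∈ S)) := by
        rintro (⟨h1, h2⟩ | ⟨h1, h2⟩) <;> rcases hP with ⟨h3, h4⟩ | ⟨h3, h4⟩
        · exact huv (h1.symm.trans h3)
        · apply hu; rw [← h1]; exact h4
        · apply hu; rw [← h1]; exact h4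
        · exact huv (h1.symm.trans h3)
      have hG' : ¬ (shiftEdges G u v S).Adj i j := by
        rw [shiftEdges_adj]
        rintro ⟨hne, ⟨-, hn1, hn2⟩ | hQ'⟩
        · rcases hP with hh | hh
          · exact hn1 hh
          · exact hn2 hh
        · exact hQ hQ'
      rw [if_pos hP, if_pos hadj, if_neg hQ, if_neg hG', zero_add, add_zero]
    · by_cases hQ : (i = u ∧ j ∈ S) ∨ (j = u ∧ i ∈ S)
      · have hnadj : ¬ G.Adj i j := by
          rcases hQ with ⟨h1, h2⟩ | ⟨h1, h2⟩
          · intro had; apply hSu j h2; rw [← h1]; exact had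
          · intro had; apply hSu i h2; rw [← h1]; exact had.symm
        have hne : i ≠ j := by
          intro hij
          subst hij
          rcases hQ with ⟨h1, h2⟩ | ⟨h1, h2⟩
          · apply hu; rw [← h1]; exact h2
          · apply hu; rw [← h1]; exact h2
        have hG' : (shiftEdges G u v S).Adj i j := by
          rw [shiftEdges_adj]
          exact ⟨hne, Or.inr hQ⟩
        rw [if_pos hQ, if_pos hG', if_neg hnadj, if_neg hP, add_zero, zero_add]
      · have hiff : (shiftEdges G u v S).Adj i j ↔ G.Adj i j := by
          rw [shiftEdges_adj]
          constructor
          · rintro ⟨hne, ⟨hh, -, -⟩ | hQ'⟩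
            · exact hh
            · exact absurd hQ' hQ
          · intro hh
            exact ⟨hh.ne, Or.inl ⟨hh, fun hc => hP (Or.inl hc), fun hc => hP (Or.inr hc)⟩⟩
        rw [if_neg hP, if_neg hQ, add_zero, add_zero, if_congr hiff rfl rfl]
  have hsum : (∑ i : V, ∑ j : V, (if (shiftEdges G u v S).Adj i j then w i j else 0))
      + (∑ i : V, ∑ j : V, (if ((i = v ∧ j ∈ S) ∨ (j = v ∧ i ∈ S)) then w i j else 0))
      = (∑ i : V, ∑ j : V, (if G.Adj i j then w i j else 0))
      + (∑ i : V, ∑ j : V, (if ((i = u ∧ j ∈ S) ∨ (j = u ∧ i ∈ S)) then w i j else 0)) := by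
    rw [← Finset.sum_add_distrib, ← Finset.sum_add_distrib]
    refine Finset.sum_congr rfl fun i _ => ?_
    rw [← Finset.sum_add_distrib, ← Finset.sum_add_distrib]
    exact Finset.sum_congr rfl fun j _ => key i j
  rw [shift_sum_indicator S v hv w, shift_sum_indicator S u hu w] at hsum
  have hcorr : ∑ x ∈ S, (w u x + w x u) = ∑ x ∈ S, (w v x + w x v) :=
    Finset.sum_congr rfl fun x hx => hw x hx
  rw [hcorr] at hsum
  exact add_right_cancel hsum

private lemma deg_sum_eq {V : Type} [Fintype V] [DecidableEq V] (H : SimpleGraph V)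
    [DecidableRel H.Adj] (f : V → ℝ) :
    ∑ x : V, (H.degree x : ℝ) * f x ^ 2
      = ∑ i : V, ∑ j : V, (if H.Adj i j then f i ^ 2 else 0) := by
  refine Finset.sum_congr rfl fun i _ => ?_
  rw [SimpleGraph.degree_eq_sum_if_adj (G := H) (R := ℝ) i, Finset.sum_mul]
  refine Finset.sum_congr rfl fun j _ => ?_
  by_cases h : H.Adj i j <;> simp [h]

/-- Theorem 4.3: let `S = {v₁, …, vₛ}` (`1 ≤ s ≤ d(v)`) consist of neighbours of `v` that are
neither neighbours of `u` nor equal to `u`, and let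
`G' = G - vv₁ - ⋯ - vvₛ + uv₁ + ⋯ + uvₛ`. If `f` is a harmonic eigenfunction associated with
`ρ(𝓛(G))` and `f(u) = f(v)`, then `ρ(𝓛(G)) ≤ ρ(𝓛(G'))`. -/
theorem stmt16 {V : Type} [Fintype V] [DecidableEq V] (G : SimpleGraph V) [DecidableRel G.Adj]
    (hG : G.Connected) (u v : V) (huv : u ≠ v) (S : Finset V) (hS : S.Nonempty)
    (hSv : ∀ x ∈ S, G.Adj v x) (hSu : ∀ x ∈ S, ¬ G.Adj u x) (hu : u ∉ S)
    (hcard : S.card ≤ G.degree v) (f : V → ℝ) (hf : IsHarmonic G (rhoL G) f)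
    (hfuv : f u = f v) :
    rhoL G ≤ rhoL (shiftEdges G u v S) := by
  classical
  obtain ⟨hf0, hfeq⟩ := hf
  have hv : v ∉ S := fun hvS => G.loopless.irrefl v (hSv v hvS)
  -- every vertex of G has positive degree
  have hdeg : ∀ x : V, 0 < G.degree x := by
    intro x
    rw [SimpleGraph.degree_pos_iff_exists_adj]
    have hxy : ∃ y, y ≠ x := by
      rcases eq_or_ne x u with rfl | hxu
      · exact ⟨v, fun hvx => huv hvx.symm⟩
      · exact ⟨u, fun h => hxu h.symm⟩
    obtain ⟨y, hy⟩ := hxy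
    obtain ⟨w⟩ := hG.preconnected x y
    cases w with
    | nil => exact absurd rfl hy.symm
    | cons h p => exact ⟨_, h⟩
  obtain ⟨x₁, hx₁⟩ : ∃ x, f x ≠ 0 := by
    by_contra hcon
    push_neg at hcon
    exact hf0 (funext fun x => hcon x)
  set T := ∑ x : V, (G.degree x : ℝ) * f x ^ 2 with hT
  have hTpos : 0 < T := by
    refine Finset.sum_pos' (fun x _ => by positivity) ⟨x₁, Finset.mem_univ _, ?_⟩
    have hd : (0:ℝ) < (G.degree x₁ : ℝ) := by exact_mod_cast hdeg x₁
    positivity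
  set ρ := rhoL G with hρdef
  -- the quadratic form of L(G) at f equals ρ * T
  have hQG : f ⬝ᵥ (G.lapMatrix ℝ *ᵥ f) = ρ * T := by
    rw [hfeq]
    simp only [dotProduct]
    rw [hT, Finset.mul_sum]
    exact Finset.sum_congr rfl fun x _ => by ring
  have hQform : ∀ (H : SimpleGraph V) (_ : DecidableRel H.Adj) (x : V → ℝ),
      x ⬝ᵥ (H.lapMatrix ℝ *ᵥ x)
        = (∑ i : V, ∑ j : V, if H.Adj i j then (x i - x j) ^ 2 else 0) / 2 := by
    intro H _ x
    rw [← Matrix.toLinearMap₂'_apply', SimpleGraph.lapMatrix_toLinearMap₂']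
  -- the quadratic sums of G and G' at f agree
  have hQeq : (∑ i : V, ∑ j : V, if (shiftEdges G u v S).Adj i j then (f i - f j) ^ 2 else 0)
      = ∑ i : V, ∑ j : V, if G.Adj i j then (f i - f j) ^ 2 else 0 := by
    refine shift_sum_eq G u v huv S hSv hSu hu _ fun x hx => ?_
    rw [hfuv]
  -- the degree sums of G and G' at f agree
  have hTeq : ∑ x : V, ((shiftEdges G u v S).degree x : ℝ) * f x ^ 2 = T := by
    rw [deg_sum_eq, hT, deg_sum_eq]
    refine shift_sum_eq G u v huv S hSv hSu hu (fun i _ => f i ^ 2) fun x hx => ?_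
    simp only [hfuv]
  -- abbreviations for G'
  set H := shiftEdges G u v S with hHdef
  set L' := H.lapMatrix ℝ with hL'def
  set D' : Matrix V V ℝ := Matrix.diagonal (fun x => (Real.sqrt (H.degree x : ℝ))⁻¹)
    with hD'def
  have hL'herm : L'.IsHermitian := (SimpleGraph.posSemidef_lapMatrix ℝ H).1
  have hNherm : (normLap H).IsHermitian := by
    unfold normLap
    rw [Matrix.IsHermitian, Matrix.conjTranspose_mul, Matrix.conjTranspose_mul,
      (Matrix.isHermitian_diagonal _ : _ᴴ = _), hL'herm.eq, mul_assoc]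
  -- the test vector
  set g : V → ℝ := fun x => Real.sqrt (H.degree x : ℝ) * f x with hgdef
  set f' : V → ℝ := fun x => (Real.sqrt (H.degree x : ℝ))⁻¹ * g x with hf'def
  have hf'adj : ∀ i : V, 0 < H.degree i → f' i = f i := by
    intro i hi
    have hs : (0:ℝ) < Real.sqrt (H.degree i : ℝ) :=
      Real.sqrt_pos.mpr (by exact_mod_cast hi)
    rw [hf'def]
    simp only [hgdef]
    rw [← mul_assoc, inv_mul_cancel₀ (ne_of_gt hs), one_mul]
  have hDg : D' *ᵥ g = f' := by
    funext x
    rw [hD'def, Matrix.mulVec_diagonal]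
  -- quadratic form of the normalized Laplacian at g
  have hNg : g ⬝ᵥ (normLap H *ᵥ g) = ρ * T := by
    have h1 : normLap H *ᵥ g = D' *ᵥ (L' *ᵥ (D' *ᵥ g)) := by
      unfold normLap
      rw [← hD'def, ← hL'def, ← Matrix.mulVec_mulVec, ← Matrix.mulVec_mulVec]
    rw [h1, hDg]
    have h2 : g ⬝ᵥ (D' *ᵥ (L' *ᵥ f')) = f' ⬝ᵥ (L' *ᵥ f') := by
      simp only [dotProduct, hD'def, Matrix.mulVec_diagonal]
      refine Finset.sum_congr rfl fun i _ => ?_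
      rw [hf'def]
      ring
    rw [h2, hQform H _ f']
    have h3 : (∑ i : V, ∑ j : V, if H.Adj i j then (f' i - f' j) ^ 2 else 0)
        = ∑ i : V, ∑ j : V, if H.Adj i j then (f i - f j) ^ 2 else 0 := by
      refine Finset.sum_congr rfl fun i _ => Finset.sum_congr rfl fun j _ => ?_
      by_cases hij : H.Adj i j
      · rw [if_pos hij, if_pos hij,
          hf'adj i (H.degree_pos_iff_exists_adj i |>.mpr ⟨j, hij⟩),
          hf'adj j (H.degree_pos_iff_exists_adj j |>.mpr ⟨i, hij.symm⟩)]
      · rw [if_neg hij, if_neg hij]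
    rw [h3, hQeq]
    have h4 := hQform G inferInstance f
    rw [hQG] at h4
    exact h4.symm
  have hggT : g ⬝ᵥ g = T := by
    have h5 : g ⬝ᵥ g = ∑ x : V, (H.degree x : ℝ) * f x ^ 2 := by
      simp only [dotProduct, hgdef]
      refine Finset.sum_congr rfl fun x _ => ?_
      have hnn : (0:ℝ) ≤ (H.degree x : ℝ) := by positivity
      calc Real.sqrt (H.degree x : ℝ) * f x * (Real.sqrt (H.degree x : ℝ) * f x)
          = Real.sqrt (H.degree x : ℝ) ^ 2 * f x ^ 2 := by ring
        _ = (H.degree x : ℝ) * f x ^ 2 := by rw [Real.sq_sqrt hnn]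
    rw [h5, hTeq]
  have hray := rayleigh_le (normLap H) hNherm g
  rw [hNg, hggT] at hray
  have hfin : ρ * T ≤ rhoL H * T := hray
  exact le_of_mul_le_mul_right hfin hTpos

end NLap
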